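/- Let F be a continuous strictly increasing CDF on [0, M] with bounded inverse and continuous positive density. In the n-contestant winner-take-all contest without a shortlist, the ex-ante maximum individual effort and total effort are both Θ(1) as n → ∞; i.e., S(n,n,1) and S^{(1)}(n,n,1) are bounded above and below by positive constants independent of n. -/

import Mathlib

open MeasureTheory intervalIntegral

/-- Total effort of the `n`-contestant winner-take-all contest in quantile form:
`S(n,n,1) = n ∫₀¹ |v'(q)| ∫₀^q (n−1)(1−t)^(n−2) t dt dq`. -/
noncomputable def totalEffortWTA (v' : ℝ → ℝ) (n : ℕ) : ℝ :=
  n * ∫ q in (0:ℝ)..1, |v' q| * ∫ t in (0:ℝ)..q, (n - 1 : ℝ) * (1 - t) ^ (n - 2) * t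

/-- Maximum individual effort of the `n`-contestant winner-take-all contest in quantile
form: `S⁽¹⁾(n,n,1) = n ∫₀¹ |v'(q)| ∫₀^q (n−1)(1−t)^(n−2) (∫₀^t (1−p)^(n−1) dp) dt dq`. -/
noncomputable def maxEffortWTA (v' : ℝ → ℝ) (n : ℕ) : ℝ :=
  n * ∫ q in (0:ℝ)..1, |v' q| *
    ∫ t in (0:ℝ)..q, (n - 1 : ℝ) * (1 - t) ^ (n - 2) * ∫ p in (0:ℝ)..t, (1 - p) ^ (n - 1)

noncomputable def Hf (n : ℕ) (q : ℝ) : ℝ :=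
  1/(n:ℝ) - (1-q)^n/(n:ℝ) - q*(1-q)^(n-1)

noncomputable def Gf (n : ℕ) (q : ℝ) : ℝ :=
  ((1 - (1-q)^(n-1)) - ((n:ℝ)-1)/(2*(n:ℝ)-1) * (1 - (1-q)^(2*n-1)))/(n:ℝ)

lemma one_sub_pow_deriv (m : ℕ) (t : ℝ) :
    HasDerivAt (fun t : ℝ => (1 - t)^m) ((m:ℝ) * (1-t)^(m-1) * (-1)) t :=
  ((hasDerivAt_id t).const_sub 1).pow m

lemma Hf_eq (n : ℕ) (hn : 2 ≤ n) (q : ℝ) :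
    ∫ t in (0:ℝ)..q, ((n:ℝ) - 1) * (1 - t) ^ (n - 2) * t = Hf n q := by
  obtain ⟨m, rfl⟩ : ∃ m, n = m + 2 := ⟨n - 2, by omega⟩
  have hn0 : ((m:ℝ) + 2) ≠ 0 := by positivity
  have key : ∀ t : ℝ, HasDerivAt (Hf (m+2))
      (((m:ℝ) + 2 - 1) * (1 - t) ^ m * t) t := by
    intro t
    have h1 := one_sub_pow_deriv (m+2) t
    have h2 := one_sub_pow_deriv (m+1) t
    have h3 : HasDerivAt (fun t : ℝ => t*(1-t)^(m+1))
        (1 * (1-t)^(m+1) + t * (((m+1:ℕ):ℝ) * (1-t)^(m+1-1) * (-1))) t :=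
      (hasDerivAt_id' t).mul h2
    have h := ((hasDerivAt_const t (1/((m:ℝ)+2))).sub
        ((h1).div_const ((m:ℝ)+2))).sub h3
    have e : Hf (m+2) = fun t : ℝ =>
        1/((m:ℝ)+2) - (1-t)^(m+2)/((m:ℝ)+2) - t*(1-t)^(m+1) := by
      funext x; simp only [Hf]; push_cast; norm_num
    rw [e]
    refine h.congr_deriv ?_
    simp only [show m+2-1 = m+1 from rfl, show m+2-2 = m from rfl,
      show m+1-1 = m from rfl]
    push_cast
    field_simp
    ring
  push_cast
  rw [intervalIntegral.integral_eq_sub_of_hasDerivAt (fun t _ => key t)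
    (by apply Continuous.intervalIntegrable; fun_prop)]
  have : Hf (m+2) 0 = 0 := by simp [Hf]
  rw [this, sub_zero]

lemma Hf_nonneg (n : ℕ) (hn : 2 ≤ n) : ∀ q ∈ Set.Icc (0:ℝ) 1, 0 ≤ Hf n q := by
  intro q hq
  rw [← Hf_eq n hn q]
  apply intervalIntegral.integral_nonneg hq.1
  intro t ht
  have h1 : (0:ℝ) ≤ (n:ℝ) - 1 := by
    have : (2:ℝ) ≤ n := by exact_mod_cast hn
    linarith
  have h2 : (0:ℝ) ≤ 1 - t := by
    have := ht.2; have := hq.2; linarith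
  exact mul_nonneg (mul_nonneg h1 (pow_nonneg h2 _)) ht.1

lemma Hf_le_one (n : ℕ) (hn : 2 ≤ n) : ∀ q ∈ Set.Icc (0:ℝ) 1, Hf n q ≤ 1 := by
  intro q hq
  have hn2 : (2:ℝ) ≤ n := by exact_mod_cast hn
  have h2 : (0:ℝ) ≤ 1 - q := by linarith [hq.2]
  have hx : (0:ℝ) ≤ (1-q)^n/(n:ℝ) := by positivity
  have hy : (0:ℝ) ≤ q*(1-q)^(n-1) := mul_nonneg hq.1 (pow_nonneg h2 _)
  have h1n : 1/(n:ℝ) ≤ 1 := by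
    rw [div_le_one (by linarith)]; linarith
  simp only [Hf]; linarith

lemma Hf_cont (n : ℕ) : Continuous (Hf n) := by
  unfold Hf; fun_prop

lemma Hf_int (n : ℕ) (hn : 2 ≤ n) :
    ∫ q in (0:ℝ)..1, Hf n q = ((n:ℝ)-1)/((n:ℝ)*((n:ℝ)+1)) := by
  obtain ⟨m, rfl⟩ : ∃ m, n = m + 2 := ⟨n - 2, by omega⟩
  set F : ℝ → ℝ := fun q =>
    q/((m:ℝ)+2) + q*(1-q)^(m+2)/((m:ℝ)+2)
      + 2*(1-q)^(m+3)/(((m:ℝ)+2)*((m:ℝ)+3)) with hF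
  have key : ∀ q : ℝ, HasDerivAt F (Hf (m+2) q) q := by
    intro q
    have h1 := one_sub_pow_deriv (m+2) q
    have h2 := one_sub_pow_deriv (m+3) q
    have h3 : HasDerivAt (fun q : ℝ => q*(1-q)^(m+2))
        (1 * (1-q)^(m+2) + q * (((m+2:ℕ):ℝ) * (1-q)^(m+2-1) * (-1))) q :=
      (hasDerivAt_id' q).mul h1
    have h := (((hasDerivAt_id' q).div_const ((m:ℝ)+2)).add
        (h3.div_const ((m:ℝ)+2))).add
        ((h2.const_mul (2:ℝ)).div_const (((m:ℝ)+2)*((m:ℝ)+3)))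
    refine h.congr_deriv ?_
    simp only [Hf, show m+2-1 = m+1 from rfl, show m+3-1 = m+2 from rfl]
    push_cast
    field_simp
    ring
  rw [intervalIntegral.integral_eq_sub_of_hasDerivAt (fun q _ => key q)
    ((Hf_cont (m+2)).intervalIntegrable 0 1)]
  simp only [hF]
  push_cast
  norm_num
  field_simp
  ring

lemma inner_eq (n : ℕ) (hn : 2 ≤ n) (t : ℝ) :
    ∫ p in (0:ℝ)..t, (1 - p) ^ (n - 1) = (1 - (1-t)^n)/(n:ℝ) := by
  obtain ⟨m, rfl⟩ : ∃ m, n = m + 2 := ⟨n - 2, by omega⟩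
  have key : ∀ p : ℝ, HasDerivAt (fun p : ℝ => (1 - (1-p)^(m+2))/((m:ℝ)+2))
      ((1 - p) ^ (m + 2 - 1)) p := by
    intro p
    have h1 := one_sub_pow_deriv (m+2) p
    have h := ((hasDerivAt_const p (1:ℝ)).sub h1).div_const ((m:ℝ)+2)
    refine h.congr_deriv ?_
    simp only [show m+2-1 = m+1 from rfl]
    push_cast
    field_simp
    ring
  rw [intervalIntegral.integral_eq_sub_of_hasDerivAt (fun p _ => key p)
    (by apply Continuous.intervalIntegrable; fun_prop)]
  push_cast
  norm_num

lemma Gf_eq (n : ℕ) (hn : 2 ≤ n) (q : ℝ) :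
    ∫ t in (0:ℝ)..q, ((n:ℝ) - 1) * (1 - t) ^ (n - 2) * ((1 - (1-t)^n)/(n:ℝ))
      = Gf n q := by
  obtain ⟨m, rfl⟩ : ∃ m, n = m + 2 := ⟨n - 2, by omega⟩
  have key : ∀ t : ℝ, HasDerivAt (Gf (m+2))
      (((m:ℝ)+2 - 1) * (1 - t) ^ m * ((1 - (1-t)^(m+2))/((m:ℝ)+2))) t := by
    intro t
    have hA := one_sub_pow_deriv (m+1) t
    have hB := one_sub_pow_deriv (2*m+3) t
    have h := (((hasDerivAt_const t (1:ℝ)).sub hA).sub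
        (((hasDerivAt_const t (1:ℝ)).sub hB).const_mul
          (((m:ℝ)+2-1)/(2*((m:ℝ)+2)-1)))).div_const ((m:ℝ)+2)
    have e : Gf (m+2) = fun t : ℝ =>
        ((1 - (1-t)^(m+1)) - ((m:ℝ)+2-1)/(2*((m:ℝ)+2)-1) * (1 - (1-t)^(2*m+3)))/((m:ℝ)+2) := by
      funext x
      simp only [Gf, show m+2-1 = m+1 from rfl, show 2*(m+2)-1 = 2*m+3 by omega]
      push_cast; ring_nf
    rw [e]
    refine h.congr_deriv ?_
    simp only [show m+1-1 = m from rfl, show 2*m+3-1 = m+(m+2) by omega,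
      show m+2-2 = m from rfl, pow_add]
    push_cast
    have h23 : (2*((m:ℝ)+2)-1) ≠ 0 := ne_of_gt (by have : (0:ℝ) ≤ m := Nat.cast_nonneg m; linarith)
    field_simp
    ring
  push_cast
  rw [intervalIntegral.integral_eq_sub_of_hasDerivAt (fun t _ => key t)
    (by apply Continuous.intervalIntegrable; fun_prop)]
  have : Gf (m+2) 0 = 0 := by simp [Gf]
  rw [this, sub_zero]

lemma Gf_nonneg (n : ℕ) (hn : 2 ≤ n) : ∀ q ∈ Set.Icc (0:ℝ) 1, 0 ≤ Gf n q := by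
  intro q hq
  rw [← Gf_eq n hn q]
  apply intervalIntegral.integral_nonneg hq.1
  intro t ht
  have hn2 : (2:ℝ) ≤ n := by exact_mod_cast hn
  have h2 : (0:ℝ) ≤ 1 - t := by
    have := ht.2; have := hq.2; linarith
  have h3 : (1-t)^n ≤ 1 := pow_le_one₀ h2 (by linarith [ht.1])
  have h4 : (0:ℝ) ≤ (1 - (1-t)^n)/(n:ℝ) := by
    apply div_nonneg (by linarith) (by linarith)
  exact mul_nonneg (mul_nonneg (by linarith) (pow_nonneg h2 _)) h4

lemma Gf_le_one (n : ℕ) (hn : 2 ≤ n) : ∀ q ∈ Set.Icc (0:ℝ) 1, Gf n q ≤ 1 := by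
  intro q hq
  have hn2 : (2:ℝ) ≤ n := by exact_mod_cast hn
  have h2 : (0:ℝ) ≤ 1 - q := by linarith [hq.2]
  have hA : (0:ℝ) ≤ (1-q)^(n-1) := pow_nonneg h2 _
  have hB : (1-q)^(2*n-1) ≤ 1 := pow_le_one₀ h2 (by linarith [hq.1])
  have hc : (0:ℝ) ≤ ((n:ℝ)-1)/(2*(n:ℝ)-1) := by
    apply div_nonneg <;> linarith
  have hcB : (0:ℝ) ≤ ((n:ℝ)-1)/(2*(n:ℝ)-1) * (1 - (1-q)^(2*n-1)) :=
    mul_nonneg hc (by linarith)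
  simp only [Gf]
  rw [div_le_one (by linarith)]
  linarith

lemma Gf_cont (n : ℕ) : Continuous (Gf n) := by
  unfold Gf; fun_prop

lemma Gf_int (n : ℕ) (hn : 2 ≤ n) :
    ∫ q in (0:ℝ)..1, Gf n q = ((n:ℝ)-1)/(2*(n:ℝ)^2) := by
  obtain ⟨m, rfl⟩ : ∃ m, n = m + 2 := ⟨n - 2, by omega⟩
  set c : ℝ := ((m:ℝ)+2-1)/(2*((m:ℝ)+2)-1) with hc
  set F : ℝ → ℝ := fun q =>
    q*(1 - c)/((m:ℝ)+2) + (1-q)^(m+2)/(((m:ℝ)+2)*((m:ℝ)+2))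
      - c*(1-q)^(2*m+4)/(((m:ℝ)+2)*(2*(m:ℝ)+4)) with hF
  have h23 : (2*((m:ℝ)+2)-1) ≠ 0 := ne_of_gt (by have : (0:ℝ) ≤ m := Nat.cast_nonneg m; linarith)
  have key : ∀ q : ℝ, HasDerivAt F (Gf (m+2) q) q := by
    intro q
    have h1 := one_sub_pow_deriv (m+2) q
    have h2 := one_sub_pow_deriv (2*m+4) q
    have h := ((((hasDerivAt_id' q).mul_const (1 - c)).div_const ((m:ℝ)+2)).add
        (h1.div_const (((m:ℝ)+2)*((m:ℝ)+2)))).sub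
        ((h2.const_mul c).div_const (((m:ℝ)+2)*(2*(m:ℝ)+4)))
    refine h.congr_deriv ?_
    simp only [Gf, hc, show m+2-1 = m+1 from rfl, show 2*m+4-1 = 2*m+3 from rfl,
      show 2*(m+2)-1 = 2*m+3 by omega]
    push_cast
    field_simp
    ring
  rw [intervalIntegral.integral_eq_sub_of_hasDerivAt (fun q _ => key q)
    ((Gf_cont (m+2)).intervalIntegrable 0 1)]
  simp only [hF, hc]
  push_cast
  norm_num
  field_simp
  ring

lemma sandwich (v v' : ℝ → ℝ) (L' L : ℝ)
    (hderiv : ∀ q ∈ Set.Icc (0:ℝ) 1, HasDerivAt v (v' q) q)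
    (hlow : ∀ q ∈ Set.Icc (0:ℝ) 1, L' ≤ |v' q|)
    (hup : ∀ q ∈ Set.Icc (0:ℝ) 1, |v' q| ≤ L)
    (hL : 0 ≤ L)
    (W : ℝ → ℝ) (hW : Continuous W)
    (hW0 : ∀ q ∈ Set.Icc (0:ℝ) 1, 0 ≤ W q) (hW1 : ∀ q ∈ Set.Icc (0:ℝ) 1, W q ≤ 1) :
    L' * ∫ q in (0:ℝ)..1, W q ≤ (∫ q in (0:ℝ)..1, |v' q| * W q) ∧
      (∫ q in (0:ℝ)..1, |v' q| * W q) ≤ L * ∫ q in (0:ℝ)..1, W q := by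
  have hint : IntervalIntegrable (fun q => |v' q| * W q) volume 0 1 := by
    rw [intervalIntegrable_iff_integrableOn_Ioc_of_le zero_le_one]
    have h1 : AEStronglyMeasurable (fun q => |deriv v q| * W q)
        (volume.restrict (Set.Ioc (0:ℝ) 1)) :=
      ((measurable_deriv v).abs.mul hW.measurable).aestronglyMeasurable
    have hmeas : AEStronglyMeasurable (fun q => |v' q| * W q)
        (volume.restrict (Set.Ioc (0:ℝ) 1)) := by
      refine h1.congr ?_
      rw [Filter.EventuallyEq, ae_restrict_iff' measurableSet_Ioc]
      filter_upwards with q hq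
      rw [(hderiv q ⟨le_of_lt hq.1, hq.2⟩).deriv]
    refine Integrable.mono' (integrable_const L) hmeas ?_
    rw [ae_restrict_iff' measurableSet_Ioc]
    filter_upwards with q hq
    have hq' : q ∈ Set.Icc (0:ℝ) 1 := ⟨le_of_lt hq.1, hq.2⟩
    have h0 := hW0 q hq'
    have h1' := hW1 q hq'
    have h2 := hup q hq'
    rw [Real.norm_eq_abs, abs_of_nonneg (mul_nonneg (abs_nonneg _) h0)]
    calc |v' q| * W q ≤ L * 1 := mul_le_mul h2 h1' h0 hL
    _ = L := mul_one L
  have hWint : IntervalIntegrable W volume 0 1 := hW.intervalIntegrable 0 1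
  constructor
  · rw [← intervalIntegral.integral_const_mul]
    exact intervalIntegral.integral_mono_on zero_le_one (hWint.const_mul L') hint
      (fun q hq => mul_le_mul_of_nonneg_right (hlow q hq) (hW0 q hq))
  · rw [← intervalIntegral.integral_const_mul]
    exact intervalIntegral.integral_mono_on zero_le_one hint (hWint.const_mul L)
      (fun q hq => mul_le_mul_of_nonneg_right (hup q hq) (hW0 q hq))

theorem stmt_11 (v v' : ℝ → ℝ) (L' L : ℝ) (hL' : 0 < L') (hL : 0 < L)
    (hderiv : ∀ q ∈ Set.Icc (0:ℝ) 1, HasDerivAt v (v' q) q)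
    (hlow : ∀ q ∈ Set.Icc (0:ℝ) 1, L' ≤ |v' q|)
    (hup : ∀ q ∈ Set.Icc (0:ℝ) 1, |v' q| ≤ L) :
    ∃ c C : ℝ, 0 < c ∧ 0 < C ∧
      ∀ n : ℕ, 2 ≤ n →
        (c ≤ totalEffortWTA v' n ∧ totalEffortWTA v' n ≤ C) ∧
          (c ≤ maxEffortWTA v' n ∧ maxEffortWTA v' n ≤ C) := by
  refine ⟨L'/4, L, by positivity, hL, fun n hn => ?_⟩
  have hn2 : (2:ℝ) ≤ n := by exact_mod_cast hn
  have hn0 : (0:ℝ) < n := by linarith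
  have hT : totalEffortWTA v' n = n * ∫ q in (0:ℝ)..1, |v' q| * Hf n q := by
    unfold totalEffortWTA
    congr 1
    refine intervalIntegral.integral_congr fun q _ => ?_
    rw [Hf_eq n hn q]
  have hM : maxEffortWTA v' n = n * ∫ q in (0:ℝ)..1, |v' q| * Gf n q := by
    unfold maxEffortWTA
    congr 1
    refine intervalIntegral.integral_congr fun q _ => ?_
    congr 1
    rw [← Gf_eq n hn q]
    refine intervalIntegral.integral_congr fun t _ => ?_
    rw [inner_eq n hn t]
  obtain ⟨hTl, hTu⟩ := sandwich v v' L' L hderiv hlow hup hL.le (Hf n) (Hf_cont n)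
    (Hf_nonneg n hn) (Hf_le_one n hn)
  obtain ⟨hMl, hMu⟩ := sandwich v v' L' L hderiv hlow hup hL.le (Gf n) (Gf_cont n)
    (Gf_nonneg n hn) (Gf_le_one n hn)
  rw [Hf_int n hn] at hTl hTu
  rw [Gf_int n hn] at hMl hMu
  rw [hT, hM]
  have eT : (n:ℝ) * (L' * (((n:ℝ)-1)/((n:ℝ)*((n:ℝ)+1)))) = L' * (((n:ℝ)-1)/((n:ℝ)+1)) := by
    field_simp
  have eT' : (n:ℝ) * (L * (((n:ℝ)-1)/((n:ℝ)*((n:ℝ)+1)))) = L * (((n:ℝ)-1)/((n:ℝ)+1)) := by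
    field_simp
  have eM : (n:ℝ) * (L' * (((n:ℝ)-1)/(2*(n:ℝ)^2))) = L' * (((n:ℝ)-1)/(2*(n:ℝ))) := by
    field_simp
  have eM' : (n:ℝ) * (L * (((n:ℝ)-1)/(2*(n:ℝ)^2))) = L * (((n:ℝ)-1)/(2*(n:ℝ))) := by
    field_simp
  have rT1 : (1:ℝ)/4 ≤ ((n:ℝ)-1)/((n:ℝ)+1) := by
    rw [div_le_div_iff₀ (by norm_num) (by linarith)]; linarith
  have rT2 : ((n:ℝ)-1)/((n:ℝ)+1) ≤ 1 := by
    rw [div_le_one (by linarith)]; linarith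
  have rM1 : (1:ℝ)/4 ≤ ((n:ℝ)-1)/(2*(n:ℝ)) := by
    rw [div_le_div_iff₀ (by norm_num) (by linarith)]; linarith
  have rM2 : ((n:ℝ)-1)/(2*(n:ℝ)) ≤ 1 := by
    rw [div_le_one (by linarith)]; linarith
  have hTl' := mul_le_mul_of_nonneg_left hTl hn0.le
  have hTu' := mul_le_mul_of_nonneg_left hTu hn0.le
  have hMl' := mul_le_mul_of_nonneg_left hMl hn0.le
  have hMu' := mul_le_mul_of_nonneg_left hMu hn0.le
  rw [eT] at hTl'
  rw [eT'] at hTu'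
  rw [eM] at hMl'
  rw [eM'] at hMu'
  have c1 : L'/4 = L' * (1/4) := by ring
  refine ⟨⟨?_, ?_⟩, ?_, ?_⟩
  · calc L'/4 = L' * (1/4) := c1
      _ ≤ L' * (((n:ℝ)-1)/((n:ℝ)+1)) := mul_le_mul_of_nonneg_left rT1 hL'.le
      _ ≤ _ := hTl'
  · calc (n:ℝ) * ∫ q in (0:ℝ)..1, |v' q| * Hf n q
        ≤ L * (((n:ℝ)-1)/((n:ℝ)+1)) := hTu'
      _ ≤ L * 1 := mul_le_mul_of_nonneg_left rT2 hL.le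
      _ = L := mul_one L
  · calc L'/4 = L' * (1/4) := c1
      _ ≤ L' * (((n:ℝ)-1)/(2*(n:ℝ))) := mul_le_mul_of_nonneg_left rM1 hL'.le
      _ ≤ _ := hMl'
  · calc (n:ℝ) * ∫ q in (0:ℝ)..1, |v' q| * Gf n q
        ≤ L * (((n:ℝ)-1)/(2*(n:ℝ))) := hMu'
      _ ≤ L * 1 := mul_le_mul_of_nonneg_left rM2 hL.le
      _ = L := mul_one L
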